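/- Let A₁ = ℕ ∩ ⋃_{n∈ℕ} [4^n, (2 - 1/n)·4^n) and A₂ = ℕ ∩ ⋃_{n∈ℕ} [(2 + 1/n)·4^n, 4^{n+1}). Then the set ℕ \ (A₁ ∪ A₂) has natural density zero. -/

import Mathlib

open Filter
open scoped Classical

noncomputable def countIn (A : Set ℕ) (N : ℕ) : ℕ :=
  ((Finset.Icc 1 N).filter (fun n => n ∈ A)).card

noncomputable def upperDensity (A : Set ℕ) : ℝ :=
  limsup (fun N => (countIn A N : ℝ) / N) atTop

noncomputable def lowerDensity (A : Set ℕ) : ℝ :=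
  liminf (fun N => (countIn A N : ℝ) / N) atTop

def hasDensity (A : Set ℕ) (d : ℝ) : Prop :=
  Tendsto (fun N => (countIn A N : ℝ) / N) atTop (nhds d)

/-- Partial sums `∑_{n=1}^k 4^n / n`. -/
noncomputable def Saux (k : ℕ) : ℝ := ∑ n ∈ Finset.Icc 1 k, (4 : ℝ) ^ n / n

lemma Saux_bound : ∀ k : ℕ, 1 ≤ k → Saux k ≤ 4 ^ (k + 1) / k := by
  intro k hk
  induction k with
  | zero => omega
  | succ k ih =>
    rcases Nat.eq_zero_or_pos k with rfl | hk1
    · simp [Saux]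
      norm_num
    · have hstep : Saux (k + 1) = Saux k + 4 ^ (k + 1) / (k + 1) := by
        unfold Saux
        rw [Finset.sum_Icc_succ_top (by omega)]
        push_cast
        ring
      have ihk := ih hk1
      have hkR : (1 : ℝ) ≤ k := by exact_mod_cast hk1
      have hkpos : (0 : ℝ) < k := by linarith
      have hk1pos : (0 : ℝ) < (k : ℝ) + 1 := by linarith
      have h1 : (4 : ℝ) ^ (k + 1) / k ≤ 2 * (4 ^ (k + 1) / ((k : ℝ) + 1)) := by
        have hp : (0 : ℝ) < (4 : ℝ) ^ (k + 1) := by positivity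
        rw [mul_div_assoc', div_le_div_iff₀ hkpos hk1pos]
        nlinarith
      have h2 : (4 : ℝ) ^ (k + 2) / ((k : ℝ) + 1) = 4 * (4 ^ (k + 1) / ((k : ℝ) + 1)) := by
        rw [pow_succ]
        ring
      have : Saux (k + 1) ≤ 3 * (4 ^ (k + 1) / ((k : ℝ) + 1)) := by
        rw [hstep]
        push_cast
        linarith
      have hp : (0 : ℝ) < (4 : ℝ) ^ (k + 1) / ((k : ℝ) + 1) := by positivity
      calc Saux (k + 1) ≤ 3 * (4 ^ (k + 1) / ((k : ℝ) + 1)) := this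
        _ ≤ 4 * (4 ^ (k + 1) / ((k : ℝ) + 1)) := by linarith
        _ = 4 ^ (k + 2) / ((k : ℝ) + 1) := h2.symm
        _ = 4 ^ (k + 1 + 1) / ((k + 1 : ℕ) : ℝ) := by push_cast; ring_nf

lemma Saux_nonneg (k : ℕ) : 0 ≤ Saux k := by
  unfold Saux
  apply Finset.sum_nonneg
  intro n _
  positivity

lemma nat_sq_le_pow (k : ℕ) : k * k ≤ 4 ^ k := by
  induction k with
  | zero => norm_num
  | succ k ih =>
    have h : k < 4 ^ k := Nat.lt_pow_self (by norm_num : 1 < 4)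
    calc (k + 1) * (k + 1) = k * k + (2 * k + 1) := by ring
      _ ≤ 4 ^ k + 3 * 4 ^ k := by
          have : 2 * k + 1 ≤ 3 * 4 ^ k := by omega
          omega
      _ = 4 ^ (k + 1) := by ring

lemma nat_le_pow (k : ℕ) : k ≤ 4 ^ k := le_of_lt (Nat.lt_pow_self (by norm_num : 1 < 4))

/-- the bad set -/
def Bset : Set ℕ :=
  ({m : ℕ | ∃ n : ℕ, 1 ≤ n ∧ 4 ^ n ≤ m ∧ (m : ℝ) < (2 - 1 / n) * 4 ^ n}
      ∪ {m : ℕ | ∃ n : ℕ, 1 ≤ n ∧ (2 + 1 / n) * 4 ^ n ≤ (m : ℝ) ∧ m < 4 ^ (n + 1)})ᶜ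

/-- endpoints of the interval around `2 * 4^n`. -/
noncomputable def aEnd (n : ℕ) : ℕ := ⌈(2 - 1 / (n : ℝ)) * 4 ^ n⌉₊
noncomputable def bEnd (n : ℕ) : ℕ := ⌊(2 + 1 / (n : ℝ)) * 4 ^ n⌋₊

lemma interval_card (n : ℕ) (hn : 1 ≤ n) :
    ((Finset.Icc (aEnd n) (bEnd n)).card : ℝ) ≤ 2 / n * 4 ^ n + 2 := by
  have hnR : (1 : ℝ) ≤ (n : ℝ) := by exact_mod_cast hn
  have hnpos : (0 : ℝ) < n := by linarith
  rcases le_or_gt (aEnd n) (bEnd n) with h | h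
  · rw [Nat.card_Icc]
    have ha : (2 - 1 / (n : ℝ)) * 4 ^ n ≤ aEnd n := Nat.le_ceil _
    have hb : (bEnd n : ℝ) ≤ (2 + 1 / (n : ℝ)) * 4 ^ n := by
      apply Nat.floor_le
      positivity
    have hcast : ((bEnd n + 1 - aEnd n : ℕ) : ℝ) = (bEnd n : ℝ) + 1 - aEnd n := by
      have : aEnd n ≤ bEnd n + 1 := by omega
      push_cast [Nat.cast_sub this]
      ring
    rw [hcast]
    have : (bEnd n : ℝ) + 1 - aEnd n ≤
        (2 + 1 / (n : ℝ)) * 4 ^ n + 1 - (2 - 1 / (n : ℝ)) * 4 ^ n := by linarith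
    calc (bEnd n : ℝ) + 1 - aEnd n
        ≤ (2 + 1 / (n : ℝ)) * 4 ^ n + 1 - (2 - 1 / (n : ℝ)) * 4 ^ n := this
      _ = 2 / n * 4 ^ n + 1 := by ring
      _ ≤ 2 / n * 4 ^ n + 2 := by linarith
  · rw [Finset.Icc_eq_empty (by omega)]
    simp
    positivity

lemma mem_Bset_large {m : ℕ} (hm : 4 ≤ m) (hB : m ∈ Bset) :
    (2 - 1 / (Nat.log 4 m : ℝ)) * 4 ^ (Nat.log 4 m) ≤ m ∧
      (m : ℝ) < (2 + 1 / (Nat.log 4 m : ℝ)) * 4 ^ (Nat.log 4 m) ∧ 1 ≤ Nat.log 4 m := by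
  set n := Nat.log 4 m with hn
  have hm0 : m ≠ 0 := by omega
  have hn1 : 1 ≤ n := by
    rw [hn, Nat.le_log_iff_pow_le (by norm_num) hm0]
    simpa using hm
  have hlow : 4 ^ n ≤ m := Nat.pow_log_le_self 4 hm0
  have hhigh : m < 4 ^ (n + 1) := Nat.lt_pow_succ_log_self (by norm_num) m
  simp only [Bset, Set.mem_compl_iff, Set.mem_union, Set.mem_setOf_eq, not_or, not_exists] at hB
  obtain ⟨h1, h2⟩ := hB
  have h1n := h1 n
  have h2n := h2 n
  push_neg at h1n h2n
  refine ⟨h1n hn1 hlow, ?_, hn1⟩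
  by_contra hcon
  push_neg at hcon
  exact absurd hhigh (by simpa using h2n hn1 hcon)

lemma count_bound (N : ℕ) (hN : 4 ≤ N) :
    (countIn Bset N : ℝ) ≤ 13 / (Nat.log 4 N : ℝ) * 4 ^ (Nat.log 4 N) := by
  set K := Nat.log 4 N with hK
  have hK1 : 1 ≤ K := by
    rw [hK, Nat.le_log_iff_pow_le (by norm_num) (by omega)]
    simpa using hN
  have hKR : (1 : ℝ) ≤ (K : ℝ) := by exact_mod_cast hK1
  have hKpos : (0 : ℝ) < K := by linarith
  -- subset step
  have hsub : (Finset.Icc 1 N).filter (fun m => m ∈ Bset) ⊆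
      Finset.Icc 1 3 ∪ (Finset.Icc 1 K).biUnion (fun n => Finset.Icc (aEnd n) (bEnd n)) := by
    intro m hm
    simp only [Finset.mem_filter, Finset.mem_Icc] at hm
    obtain ⟨⟨hm1, hmN⟩, hmB⟩ := hm
    rcases le_or_gt m 3 with h3 | h3
    · exact Finset.mem_union_left _ (Finset.mem_Icc.mpr ⟨hm1, h3⟩)
    · have hm4 : 4 ≤ m := h3
      obtain ⟨hlo, hhi, hn1⟩ := mem_Bset_large hm4 hmB
      apply Finset.mem_union_right
      rw [Finset.mem_biUnion]
      refine ⟨Nat.log 4 m, Finset.mem_Icc.mpr ⟨hn1, Nat.log_mono_right hmN⟩, ?_⟩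
      rw [Finset.mem_Icc]
      constructor
      · exact Nat.ceil_le.mpr hlo
      · exact Nat.le_floor (le_of_lt hhi)
  have hcard : (countIn Bset N : ℝ) ≤
      3 + ∑ n ∈ Finset.Icc 1 K, ((Finset.Icc (aEnd n) (bEnd n)).card : ℝ) := by
    have h1 := Finset.card_le_card hsub
    have h2 := Finset.card_union_le (Finset.Icc 1 3)
      ((Finset.Icc 1 K).biUnion (fun n => Finset.Icc (aEnd n) (bEnd n)))
    have h3 := Finset.card_biUnion_le (s := Finset.Icc 1 K)
      (t := fun n => Finset.Icc (aEnd n) (bEnd n))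
    have h4 : (Finset.Icc 1 3).card = 3 := by decide
    have : countIn Bset N ≤ 3 + ∑ n ∈ Finset.Icc 1 K, (Finset.Icc (aEnd n) (bEnd n)).card := by
      unfold countIn
      omega
    exact_mod_cast this
  have hsum : ∑ n ∈ Finset.Icc 1 K, ((Finset.Icc (aEnd n) (bEnd n)).card : ℝ) ≤
      2 * Saux K + 2 * K := by
    have : ∑ n ∈ Finset.Icc 1 K, ((Finset.Icc (aEnd n) (bEnd n)).card : ℝ) ≤
        ∑ n ∈ Finset.Icc 1 K, (2 / (n : ℝ) * 4 ^ n + 2) := by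
      apply Finset.sum_le_sum
      intro n hn
      exact interval_card n (Finset.mem_Icc.mp hn).1
    calc ∑ n ∈ Finset.Icc 1 K, ((Finset.Icc (aEnd n) (bEnd n)).card : ℝ)
        ≤ ∑ n ∈ Finset.Icc 1 K, (2 / (n : ℝ) * 4 ^ n + 2) := this
      _ = 2 * Saux K + 2 * K := by
          rw [Finset.sum_add_distrib]
          unfold Saux
          rw [Finset.mul_sum, Finset.sum_const, Nat.card_Icc]
          simp only [Nat.add_sub_cancel, nsmul_eq_mul]
          ring_nf
  -- assemble
  have hS := Saux_bound K hK1
  have hsq : ((K * K : ℕ) : ℝ) ≤ ((4 ^ K : ℕ) : ℝ) := by exact_mod_cast nat_sq_le_pow K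
  have hle : ((K : ℕ) : ℝ) ≤ ((4 ^ K : ℕ) : ℝ) := by exact_mod_cast nat_le_pow K
  push_cast at hsq hle
  have hpK : (0 : ℝ) < 4 ^ K := by positivity
  -- 3 ≤ 3 * 4^K / K
  have e1 : (3 : ℝ) ≤ 3 / K * 4 ^ K := by
    rw [div_mul_eq_mul_div, le_div_iff₀ hKpos]
    nlinarith
  have e2 : 2 * (K : ℝ) ≤ 2 / K * 4 ^ K := by
    rw [div_mul_eq_mul_div, le_div_iff₀ hKpos]
    nlinarith
  have e3 : 2 * Saux K ≤ 8 / K * 4 ^ K := by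
    have : (4 : ℝ) ^ (K + 1) / K = 4 / K * 4 ^ K := by
      rw [pow_succ]
      ring
    rw [this] at hS
    have : 2 * Saux K ≤ 2 * (4 / K * 4 ^ K) := by linarith
    calc 2 * Saux K ≤ 2 * (4 / (K : ℝ) * 4 ^ K) := this
      _ = 8 / K * 4 ^ K := by ring
  have : (countIn Bset N : ℝ) ≤ 3 / K * 4 ^ K + 8 / K * 4 ^ K + 2 / K * 4 ^ K := by
    linarith
  calc (countIn Bset N : ℝ) ≤ 3 / K * 4 ^ K + 8 / K * 4 ^ K + 2 / K * 4 ^ K := this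
    _ = 13 / K * 4 ^ K := by ring

lemma log_tendsto : Tendsto (fun N => Nat.log 4 N) atTop atTop := by
  apply tendsto_atTop_atTop.mpr
  intro b
  refine ⟨4 ^ b, fun a ha => ?_⟩
  have ha0 : a ≠ 0 := by
    have : 1 ≤ 4 ^ b := Nat.one_le_pow _ _ (by norm_num)
    omega
  exact (Nat.le_log_iff_pow_le (by norm_num) ha0).mpr ha

theorem complement_density_zero :
    hasDensity (({m : ℕ | ∃ n : ℕ, 1 ≤ n ∧ 4 ^ n ≤ m ∧ (m : ℝ) < (2 - 1 / n) * 4 ^ n}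
        ∪ {m : ℕ | ∃ n : ℕ, 1 ≤ n ∧ (2 + 1 / n) * 4 ^ n ≤ (m : ℝ) ∧ m < 4 ^ (n + 1)})ᶜ) 0 := by
  show Tendsto (fun N => (countIn Bset N : ℝ) / N) atTop (nhds 0)
  apply squeeze_zero' (g := fun N => 13 / (Nat.log 4 N : ℝ))
  · filter_upwards with N
    positivity
  · filter_upwards [eventually_ge_atTop 4] with N hN
    have hNpos : (0 : ℝ) < N := by
      have : (4 : ℝ) ≤ N := by exact_mod_cast hN
      linarith
    have hKle : ((4 ^ (Nat.log 4 N) : ℕ) : ℝ) ≤ N := by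
      exact_mod_cast Nat.pow_log_le_self 4 (by omega : N ≠ 0)
    push_cast at hKle
    have hb := count_bound N hN
    have hK1 : 1 ≤ Nat.log 4 N := by
      rw [Nat.le_log_iff_pow_le (by norm_num) (by omega)]
      simpa using hN
    have hKR : (1 : ℝ) ≤ (Nat.log 4 N : ℝ) := by exact_mod_cast hK1
    have hKpos : (0 : ℝ) < (Nat.log 4 N : ℝ) := by linarith
    have hpK : (0 : ℝ) < (4 : ℝ) ^ (Nat.log 4 N) := by positivity
    rw [div_le_div_iff₀ hNpos hKpos]
    calc (countIn Bset N : ℝ) * (Nat.log 4 N : ℝ)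
        ≤ (13 / (Nat.log 4 N : ℝ) * 4 ^ (Nat.log 4 N)) * (Nat.log 4 N : ℝ) := by
          apply mul_le_mul_of_nonneg_right hb (le_of_lt hKpos)
      _ = 13 * 4 ^ (Nat.log 4 N) := by field_simp
      _ ≤ 13 * N := by linarith
  · have h1 : Tendsto (fun N => ((Nat.log 4 N : ℕ) : ℝ)) atTop atTop :=
      tendsto_natCast_atTop_atTop.comp log_tendsto
    exact Tendsto.div_atTop tendsto_const_nhds h1
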